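/- For every n ≥ 2, the set of lecture hall partitions in ℤ^n, viewed as an additive submonoid of ℤ^n, is generated by the set H_n = {v_A : A ⊆ {1, …, n−1}}; that is, every lecture hall partition is a finite sum (equivalently, a nonnegative integer combination) of the vectors v_A. -/

import Mathlib

/-- A lecture hall partition of length `n`: a vector `λ ∈ ℤⁿ` (indexed `0,…,n-1`,
corresponding to `λ_1,…,λ_n`) with `0 ≤ λ_1` and `i·λ_{i+1} ≥ (i+1)·λ_i` for `1 ≤ i ≤ n-1`. -/
def IsLectureHall (n : ℕ) (l : Fin n → ℤ) : Prop :=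
  (∀ h : 0 < n, 0 ≤ l ⟨0, h⟩) ∧
  ∀ i : ℕ, ∀ h : i + 1 < n,
    ((i : ℤ) + 1) * l ⟨i + 1, h⟩ ≥ ((i : ℤ) + 2) * l ⟨i, by omega⟩

/-- For a subset `A = {i_1 < i_2 < ⋯ < i_k} ⊆ {1,…,n-1}`, the vector
`v_A = (0,…,0, i_1, i_2, …, i_k, i_k + 1) ∈ ℤⁿ`: `n - k - 1` leading zeros, then the
elements of `A` in increasing order, and finally `max(A) + 1` (with `v_∅ = (0,…,0,1)`). -/
def vA (n : ℕ) (A : Finset ℕ) : Fin n → ℤ := fun j =>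
  if (j : ℕ) = n - 1 then ((A.sort (· ≤ ·)).getLastD 0 : ℤ) + 1
  else if n - 1 - A.card ≤ (j : ℕ) then
    (((A.sort (· ≤ ·)).getD ((j : ℕ) - (n - 1 - A.card)) 0 : ℕ) : ℤ)
  else 0

namespace LHaux

lemma getLastD_aux : ∀ (L : List ℕ) (a d : ℕ),
    (a :: L).getLastD d = (a :: L).getD ((a :: L).length - 1) d := by
  intro L
  induction L with
  | nil => intro a d; rfl
  | cons b u ih =>
    intro a d
    rw [List.getLastD_cons, ih b a]
    have h1 : (b :: u).length - 1 < (b :: u).length := by simp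
    have h2 : (a :: b :: u).length - 1 = ((b :: u).length - 1) + 1 := by simp
    rw [h2, List.getD_cons_succ, List.getD_eq_getElem _ _ h1, List.getD_eq_getElem _ _ h1]

lemma getLastD_eq_getD (L : List ℕ) (d : ℕ) : L.getLastD d = L.getD (L.length - 1) d := by
  cases L with
  | nil => rfl
  | cons a t => exact getLastD_aux t a d

lemma sorted_getD_add_le (L : List ℕ) (hs : L.Pairwise (· < ·)) :
    ∀ t u : ℕ, t ≤ u → (hu : u < L.length) → L.getD t 0 + (u - t) ≤ L.getD u 0 := by
  intro t u htu hu
  induction u with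
  | zero =>
    interval_cases t
    simp
  | succ m ih =>
    rcases Nat.eq_or_lt_of_le htu with h | h
    · subst h; simp
    · have hm : m < L.length := by omega
      have h1 : L.getD t 0 + (m - t) ≤ L.getD m 0 := ih (by omega) hm
      have h2 : L.getD m 0 < L.getD (m+1) 0 := by
        rw [List.getD_eq_getElem _ _ hm, List.getD_eq_getElem _ _ hu]
        exact List.pairwise_iff_getElem.1 hs m (m+1) hm hu (by omega)
      omega
lemma vA_nonneg (n : ℕ) (A : Finset ℕ) (j : Fin n) : 0 ≤ vA n A j := by
  unfold vA
  split
  · positivity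
  · split
    · positivity
    · exact le_refl 0

lemma mul_step (i a b : ℤ) (h1 : a + 1 ≤ b) (h2 : a ≤ i + 1) (h3 : 0 ≤ a) (h4 : 0 ≤ i) :
    (i + 2) * a ≤ (i + 1) * b := by nlinarith

lemma vA_isLH (n : ℕ) (hn : 2 ≤ n) (A : Finset ℕ) (hA : A ⊆ Finset.Icc 1 (n-1)) :
    IsLectureHall n (vA n A) := by
  have hk : A.card ≤ n - 1 := by
    have h := Finset.card_le_card hA
    simpa [Nat.card_Icc] using h
  have hlen : (A.sort (· ≤ ·)).length = A.card := Finset.length_sort _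
  have hsorted : (A.sort (· ≤ ·)).Pairwise (· < ·) := (Finset.sortedLT_sort A).pairwise
  have hmemD : ∀ t, t < (A.sort (· ≤ ·)).length →
      1 ≤ (A.sort (· ≤ ·)).getD t 0 ∧ (A.sort (· ≤ ·)).getD t 0 ≤ n - 1 := by
    intro t ht
    rw [List.getD_eq_getElem _ _ ht]
    have hmm : (A.sort (· ≤ ·))[t] ∈ A := (Finset.mem_sort _).1 (List.getElem_mem ht)
    simpa [Finset.mem_Icc] using hA hmm
  constructor
  · intro h; exact vA_nonneg n A _
  · intro i hi
    have h1 : 0 ≤ vA n A ⟨i+1, hi⟩ := vA_nonneg n A _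
    by_cases hz : vA n A ⟨i, by omega⟩ = 0
    · rw [hz]
      have : (0:ℤ) ≤ ((i:ℤ)+1) * vA n A ⟨i+1, hi⟩ := by positivity
      simpa using this
    · have hine : i ≠ n - 1 := by omega
      have hcond : n - 1 - A.card ≤ i := by
        by_contra hc
        exact hz (by simp [vA, hine, hc])
      have hvi : vA n A ⟨i, by omega⟩ =
          (((A.sort (· ≤ ·)).getD (i - (n - 1 - A.card)) 0 : ℕ) : ℤ) := by
        simp [vA, hine, hcond]
      have hk1 : 1 ≤ A.card := by
        by_contra hc
        have : A.card = 0 := by omega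
        rw [hvi] at hz
        rw [List.getD_eq_default] at hz
        · exact hz rfl
        · omega
      set a := (A.sort (· ≤ ·)).getD (i - (n - 1 - A.card)) 0 with ha
      by_cases htop : i + 1 = n - 1
      · -- top constraint
        have hidx : i - (n - 1 - A.card) = A.card - 1 := by omega
        have hvtop : vA n A ⟨i+1, hi⟩ = ((A.sort (· ≤ ·)).getLastD 0 : ℤ) + 1 := by
          simp [vA, htop]
        rw [hvtop, getLastD_eq_getD, hlen, hvi, ha, hidx]
        have hb := hmemD (A.card - 1) (by omega)
        have hc1 : ((A.sort (· ≤ ·)).getD (A.card - 1) 0 : ℤ) ≤ (i:ℤ) + 1 := by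
          have : (A.sort (· ≤ ·)).getD (A.card - 1) 0 ≤ i + 1 := by omega
          exact_mod_cast this
        have hc0 : (0:ℤ) ≤ ((A.sort (· ≤ ·)).getD (A.card - 1) 0 : ℤ) := by positivity
        exact mul_step _ _ _ (le_refl _) hc1 hc0 (by positivity)
      · -- middle constraint
        have hine1 : i + 1 ≠ n - 1 := htop
        have hcond1 : n - 1 - A.card ≤ i + 1 := by omega
        have hvi1 : vA n A ⟨i+1, hi⟩ =
            (((A.sort (· ≤ ·)).getD (i + 1 - (n - 1 - A.card)) 0 : ℕ) : ℤ) := by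
          simp [vA, hine1, hcond1]
        set t := i - (n - 1 - A.card) with hT
        have hidx1 : i + 1 - (n - 1 - A.card) = t + 1 := by omega
        have htk : t + 1 < A.card := by omega
        have hab : a + 1 ≤ (A.sort (· ≤ ·)).getD (t+1) 0 := by
          have := sorted_getD_add_le _ hsorted t (t+1) (by omega) (by omega)
          omega
        have hlast : a + (A.card - 1 - t) ≤ (A.sort (· ≤ ·)).getD (A.card - 1) 0 :=
          sorted_getD_add_le _ hsorted t (A.card - 1) (by omega) (by omega)
        have hbd := hmemD (A.card - 1) (by omega)
        have hai : a ≤ i + 1 := by omega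
        rw [hvi, hvi1, hidx1]
        have c1 : (a:ℤ) + 1 ≤ ((A.sort (· ≤ ·)).getD (t+1) 0 : ℤ) := by exact_mod_cast hab
        have c2 : (a:ℤ) ≤ (i:ℤ) + 1 := by exact_mod_cast hai
        have c3 : (0:ℤ) ≤ (a:ℤ) := by positivity
        exact mul_step _ _ _ c1 c2 c3 (by positivity)

lemma lh_ratio {n : ℕ} {l : Fin n → ℤ} (hl : IsLectureHall n l) (i j : ℕ) (hij : i ≤ j)
    (hj : j < n) : ((j:ℤ)+1) * l ⟨i, by omega⟩ ≤ ((i:ℤ)+1) * l ⟨j, hj⟩ := by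
  induction j, hij using Nat.le_induction with
  | base => exact le_refl _
  | succ m hm ih =>
    have hmn : m < n := by omega
    have h1 := ih hmn
    have h2 := hl.2 m hj
    have a1 : ((m:ℤ)+2) * (((m:ℤ)+1) * l ⟨i, by omega⟩) ≤
        ((m:ℤ)+2) * (((i:ℤ)+1) * l ⟨m, hmn⟩) :=
      mul_le_mul_of_nonneg_left h1 (by positivity)
    have a2 : ((i:ℤ)+1) * (((m:ℤ)+2) * l ⟨m, hmn⟩) ≤
        ((i:ℤ)+1) * (((m:ℤ)+1) * l ⟨m+1, hj⟩) :=
      mul_le_mul_of_nonneg_left h2 (by positivity)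
    have key : ((m:ℤ)+1) * ((((m:ℤ)+1)+1) * l ⟨i, by omega⟩) ≤
        ((m:ℤ)+1) * (((i:ℤ)+1) * l ⟨m+1, hj⟩) := by linarith
    have := le_of_mul_le_mul_left key (by positivity : (0:ℤ) < (m:ℤ)+1)
    push_cast
    linarith [this]

lemma lh_nonneg {n : ℕ} {l : Fin n → ℤ} (hl : IsLectureHall n l) (j : ℕ) (hj : j < n) :
    0 ≤ l ⟨j, hj⟩ := by
  have h0 := hl.1 (by omega)
  have := lh_ratio hl 0 j (by omega) hj
  push_cast at this
  have c : (0:ℤ) ≤ ((j:ℤ)+1) * l ⟨0, by omega⟩ := by positivity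
  linarith

lemma lh_eq_zero {n : ℕ} (hn : 2 ≤ n) {l : Fin n → ℤ} (hl : IsLectureHall n l)
    (htop : l ⟨n-1, by omega⟩ ≤ 0) : l = 0 := by
  funext j
  obtain ⟨jv, hjv⟩ := j
  have h1 := lh_ratio hl jv (n-1) (by omega) (by omega)
  have h2 : (0:ℤ) ≤ l ⟨jv, hjv⟩ := lh_nonneg hl jv hjv
  have h3 : ((jv:ℤ)+1) * l ⟨n-1, by omega⟩ ≤ 0 :=
    mul_nonpos_of_nonneg_of_nonpos (by positivity) htop
  have h4 : (0:ℤ) < ((n-1:ℕ):ℤ)+1 := by positivity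
  have h5 : (((n-1:ℕ):ℤ)+1) * l ⟨jv, hjv⟩ ≤ (((n-1:ℕ):ℤ)+1) * 0 := by
    rw [mul_zero]; linarith
  have := le_of_mul_le_mul_left h5 h4
  have : l ⟨jv, hjv⟩ = 0 := le_antisymm this h2
  simpa using this

lemma lh_zero {n : ℕ} : IsLectureHall n 0 := by
  constructor
  · intro h; simp
  · intro i h; simp

lemma lh_add {n : ℕ} {f g : Fin n → ℤ} (hf : IsLectureHall n f) (hg : IsLectureHall n g) :
    IsLectureHall n (f + g) := by
  constructor
  · intro h
    exact add_nonneg (hf.1 h) (hg.1 h)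
  · intro i h
    have h1 := hf.2 i h
    have h2 := hg.2 i h
    simp only [Pi.add_apply, mul_add] at *
    linarith

lemma exists_vA (n : ℕ) (hn : 2 ≤ n) (w : Fin n → ℤ)
    (h0 : ∀ j : Fin n, 0 ≤ w j)
    (hadj : ∀ j : ℕ, (h : j + 1 ≤ n - 2) → 0 < w ⟨j, by omega⟩ →
      w ⟨j, by omega⟩ < w ⟨j+1, by omega⟩)
    (hbd : ∀ j : ℕ, (h : j < n - 1) → w ⟨j, by omega⟩ ≤ (j:ℤ)+1)
    (htop : w ⟨n-1, by omega⟩ = w ⟨n-2, by omega⟩ + 1) :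
    ∃ A : Finset ℕ, A ⊆ Finset.Icc 1 (n-1) ∧ w = vA n A := by
  set g : ℕ → ℤ := fun j => if h : j < n then w ⟨j, h⟩ else 0 with hgdef
  have hg0 : ∀ j, 0 ≤ g j := by
    intro j; rw [hgdef]; dsimp only; split
    · exact h0 _
    · exact le_refl 0
  have hgw : ∀ (j : ℕ) (h : j < n), g j = w ⟨j, h⟩ := by
    intro j h; rw [hgdef]; dsimp only; rw [dif_pos h]
  have hgadj : ∀ j : ℕ, j + 1 ≤ n - 2 → 0 < g j → g j < g (j+1) := by
    intro j h hp
    rw [hgw j (by omega), hgw (j+1) (by omega)]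
    rw [hgw j (by omega)] at hp
    exact hadj j h hp
  have hgbd : ∀ j : ℕ, j < n - 1 → g j ≤ (j:ℤ)+1 := by
    intro j h; rw [hgw j (by omega)]; exact hbd j h
  have hgtop : g (n-1) = g (n-2) + 1 := by
    rw [hgw (n-1) (by omega), hgw (n-2) (by omega)]; exact htop
  have hmono : ∀ i j : ℕ, i ≤ j → j ≤ n-2 → 0 < g i → g i + ((j - i : ℕ) : ℤ) ≤ g j := by
    intro i j hij hj hp
    induction j, hij using Nat.le_induction with
    | base => simp
    | succ m hm ih =>
      have h1 : g i + ((m - i : ℕ) : ℤ) ≤ g m := ih (by omega)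
      have h2 : 0 < g m := by
        have : (0:ℤ) ≤ ((m - i : ℕ) : ℤ) := by positivity
        linarith
      have h3 : g m < g (m+1) := hgadj m (by omega) h2
      have h4 : ((m + 1 - i : ℕ) : ℤ) = ((m - i : ℕ) : ℤ) + 1 := by omega
      rw [h4]; linarith
  have hup : ∀ i j : ℕ, i ≤ j → j ≤ n-2 → 0 < g i → 0 < g j := by
    intro i j hij hj hp
    have := hmono i j hij hj hp
    have : (0:ℤ) ≤ ((j - i : ℕ) : ℤ) := by positivity
    linarith [hmono i j hij hj hp]
  set F : Finset ℕ := (Finset.range (n-1)).filter (fun j => 0 < g j) with hF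
  set k : ℕ := F.card with hkdef
  have hkle : k ≤ n - 1 := by
    have h1 : F.card ≤ (Finset.range (n-1)).card := Finset.card_filter_le _ _
    rwa [Finset.card_range] at h1
  have hsuf : ∀ j : ℕ, j < n-1 → (0 < g j ↔ n-1-k ≤ j) := by
    intro j hj
    constructor
    · intro hp
      have hsub : Finset.Icc j (n-2) ⊆ F := by
        intro m hm
        rw [Finset.mem_Icc] at hm
        rw [hF, Finset.mem_filter, Finset.mem_range]
        exact ⟨by omega, hup j m hm.1 hm.2 hp⟩
      have := Finset.card_le_card hsub
      rw [Nat.card_Icc] at this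
      omega
    · intro hle
      by_contra hneg
      have hz : g j = 0 := le_antisymm (not_lt.1 hneg) (hg0 j)
      have hsub : F ⊆ Finset.Icc (j+1) (n-2) := by
        intro m hm
        rw [hF, Finset.mem_filter, Finset.mem_range] at hm
        rw [Finset.mem_Icc]
        refine ⟨?_, by omega⟩
        by_contra hmj
        have : 0 < g j := hup m j (by omega) (by omega) hm.2
        rw [hz] at this
        exact lt_irrefl 0 this
      have := Finset.card_le_card hsub
      rw [Nat.card_Icc] at this
      omega
  set M : List ℕ := (List.range k).map (fun t => (g (n-1-k+t)).toNat) with hM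
  have hMlen : M.length = k := by rw [hM]; simp
  have hMget : ∀ t : ℕ, t < k → M.getD t 0 = (g (n-1-k+t)).toNat := by
    intro t ht
    rw [List.getD_eq_getElem _ _ (by rw [hMlen]; exact ht)]
    simp [hM]
  have hpost : ∀ t : ℕ, t < k → 0 < g (n-1-k+t) :=
    fun t ht => (hsuf _ (by omega)).2 (by omega)
  have hMsort : M.Pairwise (· < ·) := by
    apply List.pairwise_iff_getElem.2
    intro a b ha hb hab
    rw [hMlen] at ha hb
    have e1 : M[a]'(by rw [hMlen]; exact ha) = (g (n-1-k+a)).toNat := by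
      simp [hM]
    have e2 : M[b]'(by rw [hMlen]; exact hb) = (g (n-1-k+b)).toNat := by
      simp [hM]
    rw [e1, e2]
    have hmm := hmono (n-1-k+a) (n-1-k+b) (by omega) (by omega) (hpost a ha)
    have hd : (1:ℤ) ≤ ((n-1-k+b - (n-1-k+a) : ℕ) : ℤ) := by omega
    have : g (n-1-k+a) < g (n-1-k+b) := by linarith
    exact (Int.toNat_lt_toNat (hpost b hb)).2 this
  have hMnodup : M.Nodup := hMsort.nodup
  set A : Finset ℕ := M.toFinset with hA
  have hcard : A.card = k := by
    rw [hA, List.toFinset_card_of_nodup hMnodup, hMlen]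
  have hsortA : A.sort (· ≤ ·) = M := by
    rw [hA]
    exact (List.toFinset_sort (· ≤ ·) hMnodup).2 (hMsort.imp le_of_lt)
  refine ⟨A, ?_, ?_⟩
  · intro a ha
    rw [hA, List.mem_toFinset, hM, List.mem_map] at ha
    obtain ⟨t, htm, hta⟩ := ha
    rw [List.mem_range] at htm
    have hp := hpost t htm
    have hb := hgbd (n-1-k+t) (by omega)
    rw [Finset.mem_Icc]
    omega
  · funext j
    obtain ⟨jv, hjv⟩ := j
    have hwg : w ⟨jv, hjv⟩ = g jv := (hgw jv hjv).symm
    by_cases hjtop : jv = n - 1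
    · have : vA n A ⟨jv, hjv⟩ = ((A.sort (· ≤ ·)).getLastD 0 : ℤ) + 1 := by
        simp [vA, hjtop]
      rw [this, hsortA, getLastD_eq_getD, hMlen]
      by_cases hk0 : k = 0
      · have hMnil : M = [] := List.length_eq_zero_iff.1 (by rw [hMlen]; exact hk0)
        rw [hMnil]
        have hz : g (n-2) = 0 := by
          have := hsuf (n-2) (by omega)
          have hnot : ¬ (n-1-k ≤ n-2) := by omega
          have := mt this.1 hnot
          exact le_antisymm (not_lt.1 this) (hg0 _)
        rw [hwg, hjtop, hgtop, hz]
        rfl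
      · have hidx : n-1-k+(k-1) = n-2 := by omega
        rw [hMget (k-1) (by omega), hidx, Int.toNat_of_nonneg (hg0 _)]
        rw [hwg, hjtop, hgtop]
    · have hjlt : jv < n - 1 := by omega
      by_cases hc : n - 1 - A.card ≤ jv
      · have : vA n A ⟨jv, hjv⟩ =
            (((A.sort (· ≤ ·)).getD (jv - (n - 1 - A.card)) 0 : ℕ) : ℤ) := by
          simp [vA, hjtop, hc]
        rw [this, hsortA, hcard]
        rw [hcard] at hc
        have hidx : n-1-k+(jv-(n-1-k)) = jv := by omega
        rw [hMget (jv-(n-1-k)) (by omega), hidx, Int.toNat_of_nonneg (hg0 _)]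
        exact hwg
      · have : vA n A ⟨jv, hjv⟩ = 0 := by
          simp [vA, hjtop]
          intro hcc
          rw [hcard] at hc
          omega
        rw [this, hwg]
        rw [hcard] at hc
        have := hsuf jv hjlt
        have hnot := mt this.1 (by omega)
        exact le_antisymm (not_lt.1 hnot) (hg0 _)

set_option maxHeartbeats 1000000 in
lemma step (n : ℕ) (hn : 2 ≤ n) (l : Fin n → ℤ) (hl : IsLectureHall n l)
    (hpos : 0 < l ⟨n-1, by omega⟩) :
    ∃ w : Fin n → ℤ, (∃ A : Finset ℕ, A ⊆ Finset.Icc 1 (n-1) ∧ w = vA n A) ∧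
      IsLectureHall n (l - w) ∧ l - w + w = l ∧ 1 ≤ w ⟨n-1, by omega⟩ := by
  set G : ℕ → ℤ := fun j => if h : j < n then l ⟨j, h⟩ else 0 with hGdef
  have hGw : ∀ (j : ℕ) (h : j < n), G j = l ⟨j, h⟩ := by
    intro j h; rw [hGdef]; dsimp only; rw [dif_pos h]
  have hGnn : ∀ j : ℕ, j < n → 0 ≤ G j := by
    intro j h; rw [hGw j h]; exact lh_nonneg hl j h
  have hstep : ∀ i : ℕ, i + 1 < n → ((i:ℤ)+1) * G (i+1) ≥ ((i:ℤ)+2) * G i := by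
    intro i h
    rw [hGw (i+1) h, hGw i (by omega)]
    exact hl.2 i h
  have hratio : ∀ i j : ℕ, i ≤ j → j < n → ((j:ℤ)+1) * G i ≤ ((i:ℤ)+1) * G j := by
    intro i j hij hj
    rw [hGw i (by omega), hGw j hj]
    exact lh_ratio hl i j hij hj
  set c : ℤ := ((n-2:ℕ):ℤ) with hc
  have hc0 : 0 ≤ c := by positivity
  set s : ℤ := G (n-1) - G (n-2) - 1 with hsdef
  have hb1 : 1 ≤ G (n-1) := by rw [hGw (n-1) (by omega)]; exact hpos
  have htopstep : (c+1) * G (n-1) ≥ (c+2) * G (n-2) := by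
    have h := hstep (n-2) (by omega)
    have e : n - 2 + 1 = n - 1 := by omega
    rw [e] at h
    exact h
  have hs0 : 0 ≤ s := by
    by_contra hneg
    push_neg at hneg
    have h2 : 0 ≤ G (n-2) := hGnn (n-2) (by omega)
    have e1 : (c+1) * (G (n-1) - G (n-2)) ≥ G (n-2) := by linarith [htopstep]
    have e2 : (c+1) * (G (n-1) - G (n-2)) ≤ 0 :=
      mul_nonpos_of_nonneg_of_nonpos (by linarith) (by linarith)
    have e3 : G (n-2) = 0 := le_antisymm (by linarith) h2
    rw [hsdef, e3] at hneg
    linarith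
  have hG1 : G (n-1) = G (n-2) + s + 1 := by rw [hsdef]; ring
  set W : ℕ → ℤ := fun j =>
    if j = n-1 then max 0 (G (n-2) - (c+1) * s) + 1 else max 0 (G j - ((j:ℤ)+1) * s)
    with hWdef
  have hWmid : ∀ j : ℕ, j < n-1 → W j = max 0 (G j - ((j:ℤ)+1) * s) := by
    intro j h; rw [hWdef]; dsimp only; rw [if_neg (by omega)]
  have hWtop : W (n-1) = max 0 (G (n-2) - (c+1) * s) + 1 := by
    rw [hWdef]; dsimp only; rw [if_pos rfl]
  have hWnn : ∀ j : ℕ, 0 ≤ W j := by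
    intro j
    rw [hWdef]; dsimp only
    split
    · have := le_max_left 0 (G (n-2) - (c+1) * s); linarith
    · exact le_max_left _ _
  have hWtop1 : 1 ≤ W (n-1) := by
    rw [hWtop]
    have := le_max_left 0 (G (n-2) - (c+1) * s); linarith
  have hcn2 : c + 1 = ((n-2:ℕ):ℤ) + 1 := rfl
  -- bound on middle coordinates
  have hWbd : ∀ j : ℕ, j < n-1 → W j ≤ (j:ℤ) + 1 := by
    intro j hj
    rw [hWmid j hj]
    apply max_le (by positivity)
    have h1 : (c+1) * G j ≤ ((j:ℤ)+1) * G (n-2) := by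
      have := hratio j (n-2) (by omega) (by omega)
      have e : ((n-2:ℕ):ℤ) = c := rfl
      linarith [this]
    have eG : (c+1) * G (n-1) = (c+1) * (G (n-2) + s + 1) := by
      exact congrArg (fun z : ℤ => (c+1) * z) hG1
    have h2 : (c+1) * (s+1) ≥ G (n-2) := by nlinarith [htopstep, eG]
    have h3 : ((j:ℤ)+1) * G (n-2) ≤ ((j:ℤ)+1) * ((c+1) * (s+1)) :=
      mul_le_mul_of_nonneg_left h2 (by positivity)
    have h4 : (c+1) * G j ≤ (c+1) * (((j:ℤ)+1) * (s+1)) := by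
      have expand : ((j:ℤ)+1) * ((c+1) * (s+1)) = (c+1) * (((j:ℤ)+1) * (s+1)) := by ring
      rw [expand] at h3
      linarith
    have h5 : G j ≤ ((j:ℤ)+1) * (s+1) := le_of_mul_le_mul_left h4 (by positivity)
    have expand2 : ((j:ℤ)+1) * (s+1) = ((j:ℤ)+1) * s + ((j:ℤ)+1) := by ring
    linarith [h5]
  -- strict increase of W among positive middle entries
  have hWadj : ∀ j : ℕ, j + 1 ≤ n - 2 → 0 < W j → W j < W (j+1) := by
    intro j hj hp
    rw [hWmid j (by omega)] at hp ⊢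
    rw [hWmid (j+1) (by omega)]
    set x := G j - ((j:ℤ)+1) * s with hx
    have hxpos : 0 < x := by
      rcases le_or_gt x 0 with h | h
      · rw [max_eq_left h] at hp; exact absurd hp (lt_irrefl 0)
      · exact h
    rw [max_eq_right (le_of_lt hxpos)]
    have hcast : ((j+1:ℕ):ℤ) + 1 = (j:ℤ) + 2 := by push_cast; ring
    rw [hcast]
    set y := G (j+1) - ((j:ℤ)+2) * s with hy
    have p1 : ((j:ℤ)+1) * y ≥ ((j:ℤ)+2) * x := by
      have := hstep j (by omega)
      rw [hx, hy]
      have ee : ((j+1:ℕ):ℤ) = (j:ℤ)+1 := by push_cast; ring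
      nlinarith [this]
    have p2 : ((j:ℤ)+1) * x < ((j:ℤ)+2) * x := by nlinarith [hxpos]
    have p3 : ((j:ℤ)+1) * x < ((j:ℤ)+1) * y := by linarith
    have p4 : x < y := lt_of_mul_lt_mul_left p3 (by positivity)
    have := le_max_right (0:ℤ) y
    linarith
  clear_value W s c G
  refine ⟨fun j : Fin n => W (j:ℕ), ?_, ?_, ?_, ?_⟩
  · -- it is a vA
    apply exists_vA n hn
    · intro j; exact hWnn _
    · intro j h hp
      exact hWadj j h hp
    · intro j h
      exact hWbd j h
    · show W (n-1) = W (n-2) + 1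
      rw [hWtop, hWmid (n-2) (by omega), ← hcn2]
  · -- l - w is lecture hall
    constructor
    · intro h
      simp only [Pi.sub_apply]
      rw [← hGw 0 h]
      show 0 ≤ G 0 - W 0
      rw [hWmid 0 (by omega)]
      have h0 : 0 ≤ G 0 := hGnn 0 (by omega)
      rcases le_total (G 0 - (((0:ℕ):ℤ)+1) * s) 0 with hcase | hcase
      · rw [max_eq_left hcase]; linarith
      · rw [max_eq_right hcase]
        have e0 : ((0:ℕ):ℤ) = 0 := rfl
        rw [e0] at hcase ⊢
        linarith
    · intro i h
      simp only [Pi.sub_apply]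
      rw [← hGw (i+1) h, ← hGw i (by omega)]
      show ((i:ℤ)+1) * (G (i+1) - W (i+1)) ≥ ((i:ℤ)+2) * (G i - W i)
      by_cases hitop : i + 1 = n - 1
      · have hi2 : i = n - 2 := by omega
        subst hi2
        rw [hitop, hWtop, hWmid (n-2) (by omega), hG1, ← hc]
        rcases le_total (G (n-2) - (c+1) * s) 0 with hcase | hcase
        · rw [max_eq_left hcase]
          nlinarith [hcase]
        · rw [max_eq_right hcase]
          apply ge_of_eq
          ring
      · have hi1 : i + 1 < n - 1 := by omega
        rw [hWmid (i+1) (by omega), hWmid i (by omega)]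
        have hcast : ((i+1:ℕ):ℤ) + 1 = (i:ℤ) + 2 := by push_cast; ring
        try rw [hcast]
        have hst := hstep i h
        have hGi : 0 ≤ G i := hGnn i (by omega)
        rcases le_total (G i - ((i:ℤ)+1) * s) 0 with hA | hA <;>
          rcases le_total (G (i+1) - ((i:ℤ)+2) * s) 0 with hB | hB
        · rw [max_eq_left hA, max_eq_left hB]
          linarith [hst]
        · rw [max_eq_left hA, max_eq_right hB]
          have : ((i:ℤ)+2) * G i ≤ ((i:ℤ)+2) * (((i:ℤ)+1) * s) :=
            mul_le_mul_of_nonneg_left (by linarith) (by positivity)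
          nlinarith [this]
        · rw [max_eq_right hA, max_eq_left hB]
          have : ((i:ℤ)+2) * (((i:ℤ)+1) * s) ≤ ((i:ℤ)+2) * G i :=
            mul_le_mul_of_nonneg_left (by linarith) (by positivity)
          nlinarith [this, hst]
        · rw [max_eq_right hA, max_eq_right hB]
          apply ge_of_eq
          ring
  · funext j
    simp only [Pi.sub_apply, Pi.add_apply]
    ring
  · show 1 ≤ W (n-1)
    exact hWtop1

end LHaux

/-- For every `n ≥ 2`, the additive monoid of lecture hall partitions in `ℤⁿ` is
generated by `H_n = {v_A : A ⊆ {1,…,n-1}}`: the additive submonoid of `ℤⁿ` generated by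
`H_n` is exactly the set of lecture hall partitions. -/
theorem lectureHall_monoid_generated_by_vA (n : ℕ) (hn : 2 ≤ n) :
    (AddSubmonoid.closure
        {v : Fin n → ℤ | ∃ A : Finset ℕ, A ⊆ Finset.Icc 1 (n - 1) ∧ v = vA n A} :
      Set (Fin n → ℤ)) = {l : Fin n → ℤ | IsLectureHall n l} := by
  apply Set.Subset.antisymm
  · intro x hx
    induction hx using AddSubmonoid.closure_induction with
    | mem v hv =>
      obtain ⟨A, hA, rfl⟩ := hv
      exact LHaux.vA_isLH n hn A hA
    | zero => exact LHaux.lh_zero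
    | add x y hx hy px py => exact LHaux.lh_add px py
  · intro l hl
    simp only [Set.mem_setOf_eq] at hl
    have main : ∀ (N : ℕ) (l : Fin n → ℤ), IsLectureHall n l →
        (l ⟨n-1, by omega⟩).toNat ≤ N →
        l ∈ AddSubmonoid.closure
          {v : Fin n → ℤ | ∃ A : Finset ℕ, A ⊆ Finset.Icc 1 (n - 1) ∧ v = vA n A} := by
      intro N
      induction N with
      | zero =>
        intro l hl htop
        have hz : l ⟨n-1, by omega⟩ ≤ 0 := by
          have := LHaux.lh_nonneg hl (n-1) (by omega)
          omega
        rw [LHaux.lh_eq_zero hn hl hz]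
        exact zero_mem _
      | succ N ih =>
        intro l hl htop
        rcases le_or_gt (l ⟨n-1, by omega⟩) 0 with hz | hp
        · rw [LHaux.lh_eq_zero hn hl hz]
          exact zero_mem _
        · obtain ⟨w, hwS, hlw, hsum, hw1⟩ := LHaux.step n hn l hl hp
          have hdec : ((l - w) ⟨n-1, by omega⟩).toNat ≤ N := by
            have h1 : (l - w) ⟨n-1, by omega⟩ = l ⟨n-1, by omega⟩ - w ⟨n-1, by omega⟩ := rfl
            have h2 : 0 ≤ (l - w) ⟨n-1, by omega⟩ := LHaux.lh_nonneg hlw (n-1) (by omega)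
            omega
          have hmem := ih (l - w) hlw hdec
          rw [← hsum]
          exact add_mem hmem (AddSubmonoid.subset_closure hwS)
    exact main (l ⟨n-1, by omega⟩).toNat l hl (le_refl _)
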